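/- The 2×2 complex matrix G = [[0,-1],[1,1]] is invertible, satisfies tr(Gᵀ · G⁻¹) = -2, and is not congruent to the matrix S = [[0,1],[-1,0]] (which also is invertible with tr(Sᵀ · S⁻¹) = -2). Hence at q = 1 there are at least two congruence classes of invertible 2×2 matrices M with tr(Mᵀ · M⁻¹) = -(q + q⁻¹). -/

import Mathlib

open Matrix

/-- Matrix congruence: `A ≡_c B` iff `A = Pᵀ * B * P` for some invertible `P`. -/
def MatCongruent {n : ℕ} (A B : Matrix (Fin n) (Fin n) ℂ) : Prop :=
  ∃ P : Matrix (Fin n) (Fin n) ℂ, IsUnit P ∧ A = Pᵀ * B * P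

/-- The matrices `G = [[0,-1],[1,1]]` and `S = [[0,1],[-1,0]]` are both invertible with
`tr(Mᵀ * M⁻¹) = -2`, yet they are not congruent; so at `q = 1` there are at least two
congruence classes of solutions. -/
theorem two_noncongruent_solutions_at_q_one :
    IsUnit (!![0, -1; 1, 1] : Matrix (Fin 2) (Fin 2) ℂ) ∧
    ((!![0, -1; 1, 1] : Matrix (Fin 2) (Fin 2) ℂ)ᵀ * (!![0, -1; 1, 1])⁻¹).trace = -2 ∧
    IsUnit (!![0, 1; -1, 0] : Matrix (Fin 2) (Fin 2) ℂ) ∧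
    ((!![0, 1; -1, 0] : Matrix (Fin 2) (Fin 2) ℂ)ᵀ * (!![0, 1; -1, 0])⁻¹).trace = -2 ∧
    ¬ MatCongruent !![0, -1; 1, 1] !![0, 1; -1, 0] := by
  refine ⟨?_, ?_, ?_, ?_, ?_⟩
  · rw [Matrix.isUnit_iff_isUnit_det, Matrix.det_fin_two_of]
    norm_num
  · rw [Matrix.inv_def, Matrix.det_fin_two_of, Matrix.adjugate_fin_two_of]
    norm_num [Matrix.trace_fin_two, Matrix.mul_apply, Fin.sum_univ_two, Matrix.transpose_apply, Matrix.cons_transpose, Matrix.vecHead, Matrix.vecTail]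
  · rw [Matrix.isUnit_iff_isUnit_det, Matrix.det_fin_two_of]
    norm_num
  · rw [Matrix.inv_def, Matrix.det_fin_two_of, Matrix.adjugate_fin_two_of]
    norm_num [Matrix.trace_fin_two, Matrix.mul_apply, Fin.sum_univ_two, Matrix.transpose_apply, Matrix.cons_transpose, Matrix.vecHead, Matrix.vecTail]
  · rintro ⟨P, hP, hA⟩
    have hS : (!![0, 1; -1, 0] : Matrix (Fin 2) (Fin 2) ℂ)ᵀ = -(!![0, 1; -1, 0]) := by
      ext i j
      fin_cases i <;> fin_cases j <;> simp
    have h : (!![0, -1; 1, 1] : Matrix (Fin 2) (Fin 2) ℂ)ᵀ = -(!![0, -1; 1, 1]) := by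
      calc (!![0, -1; 1, 1] : Matrix (Fin 2) (Fin 2) ℂ)ᵀ
          = (Pᵀ * !![0, 1; -1, 0] * P)ᵀ := by rw [hA]
        _ = Pᵀ * (!![0, 1; -1, 0])ᵀ * P := by
            rw [Matrix.transpose_mul, Matrix.transpose_mul, Matrix.transpose_transpose,
              Matrix.mul_assoc]
        _ = -(Pᵀ * !![0, 1; -1, 0] * P) := by rw [hS, Matrix.mul_neg, Matrix.neg_mul]
        _ = -(!![0, -1; 1, 1]) := by rw [← hA]
    have := congrFun (congrFun h 1) 1
    simp at this
    norm_num at this
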